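/- Let x₁, ..., x_N ∈ ℝᵈ, let P be a nonempty affine subspace with direction Q, and let Hᵢ be the orthogonal projection of xᵢ onto P. Then for each i, ⟨xᵢ - x̄, (xᵢ - Hᵢ) - (1/N)Σₖ(xₖ - Hₖ)⟩ = ‖(xᵢ - Hᵢ) - (1/N)Σₖ(xₖ - Hₖ)‖² ≥ 0, where x̄ = (1/N)Σₖ xₖ. -/

import Mathlib

/-- with `Hᵢ` the orthogonal projection of `xᵢ` onto a nonempty affine subspace
`P` and `x̄` the center of mass, for each `i`:
`⟨xᵢ - x̄, (xᵢ - Hᵢ) - (1/N)∑ₖ(xₖ - Hₖ)⟩ = ‖(xᵢ - Hᵢ) - (1/N)∑ₖ(xₖ - Hₖ)‖² ≥ 0`. -/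
theorem inner_center_proj_eq_sq_norm {d N : ℕ}
    (P : AffineSubspace ℝ (EuclideanSpace ℝ (Fin d)))
    (x H : Fin N → EuclideanSpace ℝ (Fin d))
    (hH : ∀ i, H i ∈ P) (hmin : ∀ i, ∀ p ∈ P, ‖x i - H i‖ ≤ ‖x i - p‖) :
    ∀ i : Fin N,
      (inner ℝ (x i - (N : ℝ)⁻¹ • ∑ k, x k)
        ((x i - H i) - (N : ℝ)⁻¹ • ∑ k, (x k - H k)) : ℝ)
        = ‖(x i - H i) - (N : ℝ)⁻¹ • ∑ k, (x k - H k)‖ ^ 2 ∧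
      (0 : ℝ) ≤ ‖(x i - H i) - (N : ℝ)⁻¹ • ∑ k, (x k - H k)‖ ^ 2 := by
  intro i
  refine ⟨?_, sq_nonneg _⟩
  have hN : (N : ℝ) ≠ 0 := by
    have : 0 < N := i.pos
    exact_mod_cast this.ne'
  -- each residual is orthogonal to the direction
  have hperp : ∀ j, ∀ v ∈ P.direction, (inner ℝ (x j - H j) v : ℝ) = 0 := by
    intro j v hv
    by_cases hv0 : v = 0
    · simp [hv0]
    set u := x j - H j with hu
    have key : ∀ t : ℝ, ‖u‖ ^ 2 ≤ ‖u - t • v‖ ^ 2 := by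
      intro t
      have hmem : (t • v) +ᵥ H j ∈ P :=
        AffineSubspace.vadd_mem_of_mem_direction (P.direction.smul_mem t hv) (hH j)
      have := hmin j _ hmem
      have heq : x j - ((t • v) +ᵥ H j) = u - t • v := by
        simp [hu, vadd_eq_add]; abel
      rw [heq] at this
      exact pow_le_pow_left₀ (norm_nonneg _) this 2
    set c : ℝ := inner ℝ u v with hc
    have hexp : ∀ t : ℝ, ‖u - t • v‖ ^ 2 = ‖u‖ ^ 2 - 2 * (t * c) + t ^ 2 * ‖v‖ ^ 2 := by
      intro t
      rw [@norm_sub_sq_real, real_inner_smul_right, norm_smul]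
      simp [hc, mul_pow, sq_abs]
    have hvn : (0 : ℝ) < ‖v‖ ^ 2 := by
      have := norm_pos_iff.mpr hv0
      positivity
    have h1 := key (c / ‖v‖ ^ 2)
    rw [hexp] at h1
    have h2 : (0 : ℝ) ≤ -2 * (c / ‖v‖ ^ 2 * c) + (c / ‖v‖ ^ 2) ^ 2 * ‖v‖ ^ 2 := by
      linarith
    have h3 : -2 * (c / ‖v‖ ^ 2 * c) + (c / ‖v‖ ^ 2) ^ 2 * ‖v‖ ^ 2 = -(c ^ 2 / ‖v‖ ^ 2) := by
      field_simp
      ring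
    have hc0 : c ^ 2 / ‖v‖ ^ 2 ≤ 0 := by linarith
    have hceq : c ^ 2 = c ^ 2 / ‖v‖ ^ 2 * ‖v‖ ^ 2 := by
      field_simp
    have hc2 : c ^ 2 ≤ 0 := by nlinarith
    have : c ^ 2 = 0 := le_antisymm hc2 (sq_nonneg c)
    exact pow_eq_zero_iff two_ne_zero |>.mp this
  -- the H-difference is in the direction
  have hdirmem : H i - (N : ℝ)⁻¹ • ∑ k, H k ∈ P.direction := by
    have heq : H i - (N : ℝ)⁻¹ • ∑ k, H k = (N : ℝ)⁻¹ • ∑ k, (H i - H k) := by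
      rw [Finset.sum_sub_distrib, Finset.sum_const, Finset.card_univ, Fintype.card_fin,
        smul_sub, ← Nat.cast_smul_eq_nsmul ℝ, smul_smul, inv_mul_cancel₀ hN, one_smul]
    rw [heq]
    refine P.direction.smul_mem _ (Submodule.sum_mem _ fun k _ => ?_)
    have := AffineSubspace.vsub_mem_direction (hH i) (hH k)
    simpa [vsub_eq_sub] using this
  set e : EuclideanSpace ℝ (Fin d) := (x i - H i) - (N : ℝ)⁻¹ • ∑ k, (x k - H k) with he
  set w : EuclideanSpace ℝ (Fin d) := H i - (N : ℝ)⁻¹ • ∑ k, H k with hw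
  have hdecomp : x i - (N : ℝ)⁻¹ • ∑ k, x k = e + w := by
    rw [he, hw, Finset.sum_sub_distrib, smul_sub]
    abel
  have hew : (inner ℝ w e : ℝ) = 0 := by
    rw [real_inner_comm, he, inner_sub_left, real_inner_smul_left, sum_inner]
    rw [hperp i w hdirmem]
    have : ∀ k ∈ Finset.univ, (inner ℝ (x k - H k) w : ℝ) = 0 := fun k _ =>
      hperp k w hdirmem
    rw [Finset.sum_congr rfl this]
    simp
  rw [hdecomp, inner_add_left, hew, add_zero, real_inner_self_eq_norm_sq]
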